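/- Let g ∈ SU(n,n), i.e., g ∈ SL(2n,ℂ) with g†·J·g = J where J = diag(1_n, -1_n). Suppose g = g_+ · [[cosh q, sinh q],[sinh q, cosh q]] · h_+ = g_+' · [[cosh q', sinh q'],[sinh q', cosh q']] · h_+' with g_+, h_+, g_+', h_+' in the block-diagonal subgroup G_+ = S(U(n)×U(n)) and q, q' real diagonal matrices with q_1 ≥ ⋯ ≥ q_n ≥ 0 and similarly for q'. Then q = q'. -/

import Mathlib

open Matrix Polynomial

private lemma aux_det {n : ℕ} (c : Matrix (Fin n) (Fin n) ℂ) (hc : cᴴ * c = 1)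
    (v : Fin n → ℂ) (z : ℂ) :
    (z • (1 : Matrix (Fin n) (Fin n) ℂ) - cᴴ * diagonal v * c).det
      = ∏ i, (z - v i) := by
  have h1 : z • (1 : Matrix (Fin n) (Fin n) ℂ) - cᴴ * diagonal v * c
      = cᴴ * diagonal (fun i => z - v i) * c := by
    have : (diagonal (fun i => z - v i) : Matrix (Fin n) (Fin n) ℂ)
        = z • 1 - diagonal v := by
      rw [← Matrix.diagonal_sub]
      congr 1
      ext i j
      by_cases h : i = j <;> simp [Matrix.diagonal, h, Matrix.one_apply]
    rw [this, Matrix.mul_sub, Matrix.sub_mul, Matrix.mul_smul, Matrix.smul_mul,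
      Matrix.mul_one, hc]
  rw [h1, Matrix.det_mul, Matrix.det_mul]
  have h2 : cᴴ.det * c.det = 1 := by rw [← Matrix.det_mul, hc, Matrix.det_one]
  rw [mul_comm cᴴ.det, mul_assoc, h2, mul_one, Matrix.det_diagonal]

private lemma aux_multiset {n : ℕ} (r s : Fin n → ℂ)
    (h : ∀ z : ℂ, ∏ i, (z - r i) = ∏ i, (z - s i)) :
    Multiset.map r Finset.univ.val = Multiset.map s Finset.univ.val := by
  have hp : (Multiset.map (fun a => X - C a) (Multiset.map r Finset.univ.val)).prod
      = (Multiset.map (fun a => X - C a) (Multiset.map s Finset.univ.val)).prod := by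
    apply Polynomial.funext
    intro z
    have hz := h z
    simp only [Polynomial.eval_multiset_prod, Multiset.map_map, Function.comp,
      Polynomial.eval_sub, Polynomial.eval_X, Polynomial.eval_C]
    rw [Finset.prod_eq_multiset_prod, Finset.prod_eq_multiset_prod] at hz
    simpa [Multiset.map_map] using hz
  have := congrArg Polynomial.roots hp
  rwa [Polynomial.roots_multiset_prod_X_sub_C, Polynomial.roots_multiset_prod_X_sub_C] at this

private lemma aux_herm {n : ℕ} (a c : Matrix (Fin n) (Fin n) ℂ) (ha : aᴴ * a = 1)
    (f : Fin n → ℝ) :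
    (a * diagonal (fun i => (f i : ℂ)) * c)ᴴ * (a * diagonal (fun i => (f i : ℂ)) * c)
      = cᴴ * diagonal (fun i => ((f i : ℂ))^2) * c := by
  simp only [conjTranspose_mul, diagonal_conjTranspose]
  have hstar : (star fun i => (f i : ℂ)) = fun i => (f i : ℂ) := by
    funext i; simp [Complex.conj_ofReal]
  rw [hstar]
  simp only [Matrix.mul_assoc]
  rw [show aᴴ * (a * ((diagonal fun i => (f i : ℂ)) * c))
      = (diagonal fun i => (f i : ℂ)) * c by
    rw [← Matrix.mul_assoc, ha, Matrix.one_mul]]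
  rw [← Matrix.mul_assoc (diagonal _), Matrix.diagonal_mul_diagonal]
  have h : (fun i => (f i : ℂ) * (f i : ℂ)) = fun i => ((f i : ℂ))^2 := by
    funext i; exact (pow_two _).symm
  rw [h]

/-- uniqueness of the radial part q in the generalized Cartan
decomposition of SU(n,n) with respect to G₊ = S(U(n)×U(n)). The middle
factor is A(q) = [[cosh q, sinh q],[sinh q, cosh q]]. -/
theorem stmt17 (n : ℕ) (q q' : Fin n → ℝ)
    (hq1 : ∀ i j : Fin n, i ≤ j → q j ≤ q i) (hq2 : ∀ i : Fin n, 0 ≤ q i)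
    (hq1' : ∀ i j : Fin n, i ≤ j → q' j ≤ q' i) (hq2' : ∀ i : Fin n, 0 ≤ q' i)
    (a b c d a' b' c' d' : Matrix (Fin n) (Fin n) ℂ)
    (ha : aᴴ * a = 1) (hb : bᴴ * b = 1) (hc : cᴴ * c = 1) (hd : dᴴ * d = 1)
    (ha' : a'ᴴ * a' = 1) (hb' : b'ᴴ * b' = 1) (hc' : c'ᴴ * c' = 1) (hd' : d'ᴴ * d' = 1)
    (hdetL : (fromBlocks a 0 0 b).det = 1) (hdetR : (fromBlocks c 0 0 d).det = 1)
    (hdetL' : (fromBlocks a' 0 0 b').det = 1) (hdetR' : (fromBlocks c' 0 0 d').det = 1)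
    (heq : fromBlocks a 0 0 b
        * fromBlocks (diagonal fun i => (Real.cosh (q i) : ℂ))
            (diagonal fun i => (Real.sinh (q i) : ℂ))
            (diagonal fun i => (Real.sinh (q i) : ℂ))
            (diagonal fun i => (Real.cosh (q i) : ℂ))
        * fromBlocks c 0 0 d
      = fromBlocks a' 0 0 b'
        * fromBlocks (diagonal fun i => (Real.cosh (q' i) : ℂ))
            (diagonal fun i => (Real.sinh (q' i) : ℂ))
            (diagonal fun i => (Real.sinh (q' i) : ℂ))
            (diagonal fun i => (Real.cosh (q' i) : ℂ))
        * fromBlocks c' 0 0 d') :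
    q = q' := by
  -- extract the top-left block
  have hblock : a * diagonal (fun i => (Real.cosh (q i) : ℂ)) * c
      = a' * diagonal (fun i => (Real.cosh (q' i) : ℂ)) * c' := by
    have h := congrArg Matrix.toBlocks₁₁ heq
    simpa [Matrix.fromBlocks_multiply, Matrix.toBlocks_fromBlocks₁₁] using h
  -- Hermitian form equality
  have hherm : cᴴ * diagonal (fun i => ((Real.cosh (q i) : ℂ))^2) * c
      = c'ᴴ * diagonal (fun i => ((Real.cosh (q' i) : ℂ))^2) * c' := by
    rw [← aux_herm a c ha (fun i => Real.cosh (q i)),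
      ← aux_herm a' c' ha' (fun i => Real.cosh (q' i)), hblock]
  -- determinant / characteristic polynomial equality
  have hdet : ∀ z : ℂ, ∏ i, (z - ((Real.cosh (q i) : ℂ))^2)
      = ∏ i, (z - ((Real.cosh (q' i) : ℂ))^2) := by
    intro z
    have h1 := aux_det c hc (fun i => ((Real.cosh (q i) : ℂ))^2) z
    have h2 := aux_det c' hc' (fun i => ((Real.cosh (q' i) : ℂ))^2) z
    rw [← h1, ← h2, hherm]
  have hmul := aux_multiset _ _ hdet
  -- pass to real multisets
  have hmulR : Multiset.map (fun i => Real.cosh (q i)^2) Finset.univ.val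
      = Multiset.map (fun i => Real.cosh (q' i)^2) Finset.univ.val := by
    apply Multiset.map_injective Complex.ofReal_injective
    have hcast : ∀ (q : Fin n → ℝ),
        ((fun x : ℝ => (x : ℂ)) ∘ fun i => Real.cosh (q i)^2)
          = fun i => ((Real.cosh (q i) : ℂ))^2 := by
      intro q; funext i; simp [Complex.ofReal_pow]
    rw [Multiset.map_map, Multiset.map_map, hcast, hcast]
    exact hmul
  -- sorted lists
  have hcoe : ∀ (f : Fin n → ℝ), Multiset.map f (Finset.univ.val : Multiset (Fin n))
      = ↑(List.ofFn f) := by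
    intro f
    rw [Fin.univ_def]
    simp [List.ofFn_eq_map]
  rw [hcoe, hcoe, Multiset.coe_eq_coe] at hmulR
  haveI : IsAntisymm ℝ (fun x y => y ≤ x) := ⟨fun _ _ h1 h2 => le_antisymm h2 h1⟩
  have sorted : ∀ (q : Fin n → ℝ), (∀ i j : Fin n, i ≤ j → q j ≤ q i) →
      (∀ i, 0 ≤ q i) →
      (List.ofFn fun i => Real.cosh (q i)^2).Pairwise (fun x y => y ≤ x) := by
    intro q hq1 hq2
    rw [List.pairwise_ofFn]
    intro i j hij
    show Real.cosh (q j)^2 ≤ Real.cosh (q i)^2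
    have h1 : q j ≤ q i := hq1 i j hij.le
    have h2 : Real.sinh (q j) ≤ Real.sinh (q i) := Real.sinh_le_sinh.mpr h1
    have h3 : 0 ≤ Real.sinh (q j) := Real.sinh_nonneg_iff.mpr (hq2 j)
    nlinarith [Real.cosh_sq (q i), Real.cosh_sq (q j)]
  have hlist := List.Perm.eq_of_pairwise' (sorted q hq1 hq2) (sorted q' hq1' hq2') hmulR
  have hfun := List.ofFn_inj.mp hlist
  funext i
  have hcosh2 : Real.cosh (q i)^2 = Real.cosh (q' i)^2 := congrFun hfun i
  have hs : Real.sinh (q i)^2 = Real.sinh (q' i)^2 := by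
    have e1 := Real.cosh_sq (q i)
    have e2 := Real.cosh_sq (q' i)
    linarith
  have h1 : 0 ≤ Real.sinh (q i) := Real.sinh_nonneg_iff.mpr (hq2 i)
  have h2 : 0 ≤ Real.sinh (q' i) := Real.sinh_nonneg_iff.mpr (hq2' i)
  have : Real.sinh (q i) = Real.sinh (q' i) := by
    calc Real.sinh (q i) = √(Real.sinh (q i)^2) := (Real.sqrt_sq h1).symm
    _ = √(Real.sinh (q' i)^2) := by rw [hs]
    _ = Real.sinh (q' i) := Real.sqrt_sq h2
  exact Real.sinh_injective this
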